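/- Accumulated second-moment bound: Define Q_M := Σ_{m=0}^{M−1} Σ_{k=0}^{K−1} γ_{i_k}² E[‖g_k^m‖²]. Under (UG), (BV), L-smoothness of F, and bounded heterogeneity, if γ_max ≤ 1/(2 K L ρ), then Q_M ≤ 2 A M (σ² + ζ²) + 4 A ρ² Σ_{m=0}^{M−1} E[‖∇F(x^m)‖²]. -/

import Mathlib

open MeasureTheory Finset

lemma sum_range_mul_eq {β : Type*} [AddCommMonoid β] (f : ℕ → β) (M K : ℕ) :
    ∑ t ∈ Finset.range (M * K), f t
      = ∑ m ∈ Finset.range M, ∑ k ∈ Finset.range K, f (m * K + k) := by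
  induction M with
  | zero => simp
  | succ M ih =>
      rw [Finset.sum_range_succ, ← ih, Nat.succ_mul, Finset.sum_range_add]

lemma condExp_clm_comp {α : Type*} {m m0 : MeasurableSpace α} {μ : Measure α}
    (hm : m ≤ m0) [IsFiniteMeasure μ]
    {E F : Type*} [NormedAddCommGroup E] [NormedSpace ℝ E] [CompleteSpace E]
    [NormedAddCommGroup F] [NormedSpace ℝ F] [CompleteSpace F]
    (T : E →L[ℝ] F) {f : α → E} (hf : Integrable f μ) :
    (fun ω => T ((μ[f|m]) ω)) =ᵐ[μ] μ[fun ω => T (f ω)|m] := by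
  refine ae_eq_condExp_of_forall_setIntegral_eq hm (T.integrable_comp hf) ?_ ?_ ?_
  · intro s _ _
    exact (T.integrable_comp integrable_condExp).integrableOn
  · intro s hs hμs
    rw [T.integral_comp_comm integrable_condExp.integrableOn,
      T.integral_comp_comm hf.integrableOn, setIntegral_condExp hm hf hs]
  · exact (T.continuous.comp_stronglyMeasurable stronglyMeasurable_condExp).aestronglyMeasurable

lemma mul_L2_integrable {α : Type*} {m0 : MeasurableSpace α} {μ : Measure α}
    {f q : α → ℝ} (hf : MemLp f 2 μ) (hq : MemLp q 2 μ) :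
    Integrable (fun ω => q ω * f ω) μ := by
  rw [← memLp_one_iff_integrable]
  exact hf.smul hq

/-- Orthogonality: `E‖g‖² = E‖g − h‖² + E‖h‖²` when `h` is the conditional expectation
of `g` with respect to a sub-σ-algebra. -/
lemma integral_norm_sq_decomp {α : Type*} {m m0 : MeasurableSpace α} {μ : Measure α}
    (hm : m ≤ m0) [IsProbabilityMeasure μ] {d : ℕ}
    {g h : α → EuclideanSpace ℝ (Fin d)}
    (hg : MemLp g 2 μ) (hh : MemLp h 2 μ) (hhm : StronglyMeasurable[m] h)
    (hgh : μ[g|m] =ᵐ[μ] h) :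
    ∫ ω, ‖g ω‖ ^ 2 ∂μ = ∫ ω, ‖g ω - h ω‖ ^ 2 ∂μ + ∫ ω, ‖h ω‖ ^ 2 ∂μ := by
  have hgi : Integrable g μ := hg.integrable one_le_two
  have hhi : Integrable h μ := hh.integrable one_le_two
  set gj : Fin d → α → ℝ := fun j ω => g ω j with hgj
  set hj : Fin d → α → ℝ := fun j ω => h ω j with hhj
  have hgj2 : ∀ j, MemLp (gj j) 2 μ :=
    fun j => ((EuclideanSpace.proj j : EuclideanSpace ℝ (Fin d) →L[ℝ] ℝ).comp_memLp' hg)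
  have hhj2 : ∀ j, MemLp (hj j) 2 μ :=
    fun j => ((EuclideanSpace.proj j : EuclideanSpace ℝ (Fin d) →L[ℝ] ℝ).comp_memLp' hh)
  have hhjm : ∀ j, StronglyMeasurable[m] (hj j) := fun j =>
    ((EuclideanSpace.proj j : EuclideanSpace ℝ (Fin d) →L[ℝ] ℝ).continuous.comp_stronglyMeasurable hhm)
  have hcond : ∀ j, μ[gj j|m] =ᵐ[μ] hj j := by
    intro j
    refine (condExp_clm_comp hm (EuclideanSpace.proj j : EuclideanSpace ℝ (Fin d) →L[ℝ] ℝ) hgi).symm.trans ?_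
    filter_upwards [hgh] with ω hω
    simp [hω, hhj]
  have hprod_int : ∀ j, Integrable (fun ω => hj j ω * (gj j ω - hj j ω)) μ :=
    fun j => mul_L2_integrable ((hgj2 j).sub (hhj2 j)) (hhj2 j)
  have hcross : ∀ j, ∫ ω, hj j ω * (gj j ω - hj j ω) ∂μ = 0 := by
    intro j
    have hsubi : Integrable (fun ω => gj j ω - hj j ω) μ :=
      ((hgj2 j).sub (hhj2 j)).integrable one_le_two
    have h1 : μ[fun ω => hj j ω * (gj j ω - hj j ω)|m]
        =ᵐ[μ] fun ω => hj j ω * (μ[fun ω' => gj j ω' - hj j ω'|m]) ω :=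
      condExp_mul_of_stronglyMeasurable_left (hhjm j) (hprod_int j) hsubi
    have h2 : μ[fun ω' => gj j ω' - hj j ω'|m] =ᵐ[μ] fun _ => (0 : ℝ) := by
      have := condExp_sub (μ := μ) (m := m) ((hgj2 j).integrable one_le_two)
        ((hhj2 j).integrable one_le_two)
      refine this.trans ?_
      have h3 : μ[hj j|m] = hj j :=
        condExp_of_stronglyMeasurable hm (hhjm j) ((hhj2 j).integrable one_le_two)
      filter_upwards [hcond j] with ω hω
      simp [Pi.sub_apply, hω, h3]
    calc ∫ ω, hj j ω * (gj j ω - hj j ω) ∂μ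
        = ∫ ω, (μ[fun ω => hj j ω * (gj j ω - hj j ω)|m]) ω ∂μ :=
          (integral_condExp hm).symm
      _ = ∫ ω, (0:ℝ) ∂μ := by
          refine integral_congr_ae ?_
          filter_upwards [h1, h2] with ω hω1 hω2
          rw [hω1, hω2]
          simp
      _ = 0 := by simp
  have hpt : ∀ ω, ‖g ω‖ ^ 2 = ‖g ω - h ω‖ ^ 2 + ‖h ω‖ ^ 2
      + 2 * ∑ j, hj j ω * (gj j ω - hj j ω) := by
    intro ω
    have hinner : (inner ℝ (g ω - h ω) (h ω) : ℝ) = ∑ j, hj j ω * (gj j ω - hj j ω) := by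
      rw [PiLp.inner_apply]
      refine Finset.sum_congr rfl fun j _ => ?_
      simp only [RCLike.inner_apply, conj_trivial, PiLp.sub_apply, hgj, hhj]
    have := norm_add_sq_real (g ω - h ω) (h ω)
    rw [sub_add_cancel] at this
    rw [this, hinner]
    ring
  have hint1 : Integrable (fun ω => ‖g ω - h ω‖ ^ 2) μ :=
    (memLp_two_iff_integrable_sq_norm (hg.sub hh).aestronglyMeasurable).mp (hg.sub hh)
  have hint2 : Integrable (fun ω => ‖h ω‖ ^ 2) μ :=
    (memLp_two_iff_integrable_sq_norm hh.aestronglyMeasurable).mp hh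
  have hint3 : Integrable (fun ω => ∑ j, hj j ω * (gj j ω - hj j ω)) μ :=
    integrable_finset_sum _ fun j _ => hprod_int j
  calc ∫ ω, ‖g ω‖ ^ 2 ∂μ
      = ∫ ω, (‖g ω - h ω‖ ^ 2 + ‖h ω‖ ^ 2
          + 2 * ∑ j, hj j ω * (gj j ω - hj j ω)) ∂μ := by
        exact integral_congr_ae (Filter.Eventually.of_forall hpt)
    _ = ∫ ω, ‖g ω - h ω‖ ^ 2 ∂μ + ∫ ω, ‖h ω‖ ^ 2 ∂μ
          + 2 * ∫ ω, ∑ j, hj j ω * (gj j ω - hj j ω) ∂μ := by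
        have hint12 : Integrable (fun ω => ‖g ω - h ω‖ ^ 2 + ‖h ω‖ ^ 2) μ := hint1.add hint2
        have hint3' : Integrable (fun ω => 2 * ∑ j, hj j ω * (gj j ω - hj j ω)) μ :=
          hint3.const_mul 2
        rw [integral_add hint12 hint3', integral_add hint1 hint2, MeasureTheory.integral_const_mul]
    _ = ∫ ω, ‖g ω - h ω‖ ^ 2 ∂μ + ∫ ω, ‖h ω‖ ^ 2 ∂μ := by
        rw [integral_finset_sum _ fun j _ => hprod_int j]
        simp [hcross]

set_option maxHeartbeats 1000000 in
/-- **Accumulated second-moment bound.**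
Asynchronous SGD with cyclic update schedule (flattened iteration index `t = m*K + k`):
`n` workers with computation times `τ i > 0` satisfying the harmonic-periods condition,
worker `i` delivering `Ki i = τmax / τ i` gradients per cycle of `K` inner iterations
following the (K-periodic) schedule `ι`; the server updates `z (t+1) = z t − γ (ι t) • g t`
from `z 0 = x⁰`; the stale model `y t` at which `g t` is computed is the server iterate seen
by worker `ι t` at its previous delivery (hence an earlier server iterate lying at most `K`
updates in the past), encoded by `hy0`/`hyprev`.  Under (UG), (BV), `L`-smoothness of
`F = (1/n) ∑ i, F i`, bounded heterogeneity, and `γmax ≤ 1/(2 K L ρ)`, the quantity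
`Q_M = ∑_{m<M} ∑_{k<K} γ_{i_k}² E[‖g_k^m‖²]` satisfies
`Q_M ≤ 2 A M (σ² + ζ²) + 4 A ρ² ∑_{m<M} E[‖∇F(x^m)‖²]`, where `A = ∑_{k<K} γ_{i_k}²`. -/
theorem accumulated_second_moment_bound
    {d n : ℕ} (hn : 0 < n)
    {Ω : Type} {m0 : MeasurableSpace Ω} (μ : Measure Ω) [IsProbabilityMeasure μ]
    (Floc : Fin n → EuclideanSpace ℝ (Fin d) → ℝ)
    (hdiff : ∀ i, Differentiable ℝ (Floc i))
    (F : EuclideanSpace ℝ (Fin d) → ℝ)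
    (hF : ∀ x, F x = (1 / (n : ℝ)) * ∑ i, Floc i x)
    (τ : Fin n → ℝ) (hτpos : ∀ i, 0 < τ i)
    (hharm : ∀ i j, (∃ q : ℕ, τ i = (q : ℝ) * τ j) ∨ (∃ q : ℕ, τ j = (q : ℝ) * τ i))
    (τmax : ℝ) (hτmax : IsGreatest (Set.range τ) τmax)
    (Ki : Fin n → ℕ) (hKi : ∀ i, (Ki i : ℝ) = τmax / τ i)
    (K : ℕ) (hK : K = ∑ i, Ki i)
    (ι : ℕ → Fin n) (hιper : ∀ t, ι (t + K) = ι t)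
    (hιcount : ∀ i, ((Finset.range K).filter fun k => ι k = i).card = Ki i)
    (γ : Fin n → ℝ) (hγpos : ∀ i, 0 < γ i)
    (ℱ : ℕ → MeasurableSpace Ω) (hℱmono : Monotone ℱ) (hℱle : ∀ t, ℱ t ≤ m0)
    (g y z : ℕ → Ω → EuclideanSpace ℝ (Fin d))
    (x0 : EuclideanSpace ℝ (Fin d)) (hz0 : ∀ ω, z 0 ω = x0)
    (hzrec : ∀ t ω, z (t + 1) ω = z t ω - γ (ι t) • g t ω)
    (hy0 : ∀ t, (∀ s < t, ι s ≠ ι t) → y t = z 0)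
    (hyprev : ∀ s t, s < t → ι s = ι t → (∀ u, s < u → u < t → ι u ≠ ι t) →
        y t = z (s + 1))
    (hg2 : ∀ t, MemLp (g t) 2 μ)
    (hgmeas : ∀ t, StronglyMeasurable[ℱ (t + 1)] (g t))
    (hymeas : ∀ t, StronglyMeasurable[ℱ t] (y t))
    (hzmeas : ∀ t, StronglyMeasurable[ℱ t] (z t))
    (σ : ℝ)
    (hUG : ∀ t, μ[g t | ℱ t] =ᵐ[μ] fun ω => gradient (Floc (ι t)) (y t ω))
    (hBV : ∀ t, μ[(fun ω => ‖g t ω - gradient (Floc (ι t)) (y t ω)‖ ^ 2) | ℱ t]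
        ≤ᵐ[μ] fun _ => σ ^ 2)
    (L : ℝ)
    (hL : ∀ x x', ‖gradient F x - gradient F x'‖ ≤ L * ‖x - x'‖)
    (ζ ρ : ℝ) (hζ : 0 ≤ ζ) (hρ : 0 ≤ ρ)
    (hhet : ∀ i x, ‖gradient (Floc i) x‖ ^ 2 ≤ ζ ^ 2 + ρ ^ 2 * ‖gradient F x‖ ^ 2)
    (hγmax : ∀ i, 2 * (K : ℝ) * L * ρ * γ i ≤ 1)
    (M : ℕ) :
    ∑ m ∈ Finset.range M, ∑ k ∈ Finset.range K,
        γ (ι k) ^ 2 * ∫ ω, ‖g (m * K + k) ω‖ ^ 2 ∂μ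
      ≤ 2 * (∑ k ∈ Finset.range K, γ (ι k) ^ 2) * M * (σ ^ 2 + ζ ^ 2)
        + 4 * (∑ k ∈ Finset.range K, γ (ι k) ^ 2) * ρ ^ 2 *
            ∑ m ∈ Finset.range M, ∫ ω, ‖gradient F (z (m * K) ω)‖ ^ 2 ∂μ := by
  classical
  -- notation
  set A : ℝ := ∑ k ∈ Finset.range K, γ (ι k) ^ 2 with hA
  have hAnn : 0 ≤ A := Finset.sum_nonneg fun k _ => sq_nonneg _
  have hgsqnn : ∀ u, 0 ≤ ∫ ω, ‖g u ω‖ ^ 2 ∂μ := fun u =>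
    integral_nonneg fun ω => sq_nonneg _
  have hDnn : ∀ m : ℕ, 0 ≤ ∫ ω, ‖gradient F (z (m * K) ω)‖ ^ 2 ∂μ := fun m =>
    integral_nonneg fun ω => sq_nonneg _
  -- trivial case d = 0
  rcases Nat.eq_zero_or_pos d with hd | hd
  · subst hd
    have hg0 : ∀ u, (∫ ω, ‖g u ω‖ ^ 2 ∂μ) = 0 := by
      intro u
      have : ∀ ω, ‖g u ω‖ ^ 2 = 0 := by
        intro ω
        have : g u ω = 0 := Subsingleton.elim _ _
        simp [this]
      simp [this]
    have hlhs : ∑ m ∈ Finset.range M, ∑ k ∈ Finset.range K,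
        γ (ι k) ^ 2 * ∫ ω, ‖g (m * K + k) ω‖ ^ 2 ∂μ = 0 := by
      refine Finset.sum_eq_zero fun m _ => Finset.sum_eq_zero fun k _ => ?_
      rw [hg0]; ring
    rw [hlhs]
    have h1 : 0 ≤ 2 * A * M * (σ ^ 2 + ζ ^ 2) := by positivity
    have h2 : 0 ≤ 4 * A * ρ ^ 2 *
        ∑ m ∈ Finset.range M, ∫ ω, ‖gradient F (z (m * K) ω)‖ ^ 2 ∂μ := by
      have := Finset.sum_nonneg fun m (_ : m ∈ Finset.range M) => hDnn m
      positivity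
    linarith
  -- main case
  -- basic positivity facts
  have hKipos : ∀ i, 0 < Ki i := by
    intro i
    have hτle : τ i ≤ τmax := hτmax.2 ⟨i, rfl⟩
    have : (0 : ℝ) < (Ki i : ℝ) := by
      rw [hKi i]
      exact div_pos (lt_of_lt_of_le (hτpos i) hτle) (hτpos i)
    exact_mod_cast this
  have hKpos : 0 < K := by
    rw [hK]
    exact Finset.sum_pos (fun i _ => hKipos i) ⟨⟨0, hn⟩, Finset.mem_univ _⟩
  have hKR : (1 : ℝ) ≤ (K : ℝ) := by exact_mod_cast hKpos
  have hL0 : 0 ≤ L := by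
    have hx : ‖(EuclideanSpace.single (⟨0, hd⟩ : Fin d) (1:ℝ) : EuclideanSpace ℝ (Fin d))‖ = 1 := by
      simp [EuclideanSpace.norm_single]
    have h1 := hL (EuclideanSpace.single (⟨0, hd⟩ : Fin d) (1:ℝ)) 0
    rw [sub_zero, hx] at h1
    have h0 := norm_nonneg (gradient F (EuclideanSpace.single (⟨0, hd⟩ : Fin d) (1:ℝ)) - gradient F 0)
    linarith
  -- periodicity
  have hι_add : ∀ m k, ι (k + m * K) = ι k := by
    intro m
    induction m with
    | zero => intro k; simp
    | succ m ih =>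
        intro k
        have : k + (m + 1) * K = (k + m * K) + K := by ring
        rw [this, hιper, ih]
  -- measurability of gradients
  have hgradmeas : ∀ f : EuclideanSpace ℝ (Fin d) → ℝ, Measurable (gradient f) := by
    intro f
    have h1 : Measurable (fderiv ℝ f) := measurable_fderiv ℝ f
    have h2 : Continuous fun T : EuclideanSpace ℝ (Fin d) →L[ℝ] ℝ =>
        (InnerProductSpace.toDual ℝ (EuclideanSpace ℝ (Fin d))).symm T :=
      (InnerProductSpace.toDual ℝ (EuclideanSpace ℝ (Fin d))).symm.continuous
    exact h2.measurable.comp h1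
  -- L² membership of the iterates
  have hzMem : ∀ t, MemLp (z t) 2 μ := by
    intro t
    induction t with
    | zero =>
        have : z 0 = fun _ => x0 := funext hz0
        rw [this]
        exact memLp_const x0
    | succ t ih =>
        have : z (t + 1) = fun ω => z t ω - γ (ι t) • g t ω := funext (hzrec t)
        rw [this]
        exact ih.sub ((hg2 t).const_smul (γ (ι t)))
  -- the stale iterate is a recent server iterate
  have hyp : ∀ t, ∃ p, p ≤ t ∧ t ≤ p + K ∧ y t = z p := by
    intro t
    by_cases hex : ∃ s, s < t ∧ ι s = ι t
    · set P : ℕ → Prop := fun s => s < t ∧ ι s = ι t with hP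
      obtain ⟨s₀, hs₀⟩ := hex
      have hs₀le : s₀ ≤ t := le_of_lt hs₀.1
      have hspec : P (Nat.findGreatest P t) := Nat.findGreatest_spec hs₀le hs₀
      set s := Nat.findGreatest P t with hs
      refine ⟨s + 1, hspec.1, ?_, ?_⟩
      · -- t ≤ s + 1 + K
        rcases le_or_gt K t with hKt | hKt
        · have hu : P (t - K) := by
            constructor
            · omega
            · have h := hιper (t - K)
              have ht : (t - K) + K = t := by omega
              rw [ht] at h
              exact h.symm
          have := Nat.le_findGreatest (by omega : t - K ≤ t) hu
          omega
        · omega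
      · refine hyprev s t hspec.1 hspec.2 ?_
        intro u hsu hut hιu
        exact Nat.findGreatest_is_greatest hsu (le_of_lt hut) ⟨hut, hιu⟩
    · push_neg at hex
      have hy := hy0 t hex
      refine ⟨0, Nat.zero_le _, ?_, hy⟩
      by_contra hc
      push_neg at hc
      have hKt : K ≤ t := by omega
      have h : ι (t - K) = ι t := by
        have h := hιper (t - K)
        have ht : (t - K) + K = t := by omega
        rw [ht] at h
        exact h.symm
      exact hex (t - K) (by omega) h
  have hyMem : ∀ t, MemLp (y t) 2 μ := by
    intro t
    obtain ⟨p, _, _, hyz⟩ := hyp t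
    rw [hyz]
    exact hzMem p
  -- L² membership of gradient compositions
  have hgradFw : ∀ w : Ω → EuclideanSpace ℝ (Fin d), MemLp w 2 μ → Measurable w →
      MemLp (fun ω => gradient F (w ω)) 2 μ := by
    intro w hw2 hwm
    have hmeas : AEStronglyMeasurable (fun ω => gradient F (w ω)) μ :=
      ((hgradmeas F).comp hwm).aestronglyMeasurable
    have hB : MemLp (fun ω => ‖gradient F x0‖ + L * ‖w ω - x0‖) 2 μ := by
      exact (memLp_const ‖gradient F x0‖).add (((hw2.sub (memLp_const x0)).norm).const_mul L)
    refine hB.of_le hmeas ?_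
    refine Filter.Eventually.of_forall fun ω => ?_
    have h1 : ‖gradient F (w ω)‖ ≤ ‖gradient F x0‖ + L * ‖w ω - x0‖ := by
      have h2 := hL (w ω) x0
      have h3 : ‖gradient F (w ω)‖ ≤ ‖gradient F x0‖ + ‖gradient F (w ω) - gradient F x0‖ := by
        have := norm_sub_norm_le (gradient F (w ω)) (gradient F x0)
        linarith
      linarith
    exact h1.trans (le_abs_self _)
  have hzmeasM : ∀ t, Measurable (z t) :=
    fun t => ((hzmeas t).measurable).mono (hℱle t) le_rfl
  have hymeasM : ∀ t, Measurable (y t) :=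
    fun t => ((hymeas t).measurable).mono (hℱle t) le_rfl
  have hgradFy : ∀ t, MemLp (fun ω => gradient F (y t ω)) 2 μ :=
    fun t => hgradFw (y t) (hyMem t) (hymeasM t)
  have hgradFz : ∀ t, MemLp (fun ω => gradient F (z t ω)) 2 μ :=
    fun t => hgradFw (z t) (hzMem t) (hzmeasM t)
  -- the local gradient at the stale point
  have hhSM : ∀ t, StronglyMeasurable[ℱ t] fun ω => gradient (Floc (ι t)) (y t ω) := by
    intro t
    exact (((hgradmeas (Floc (ι t))).comp (hymeas t).measurable)).stronglyMeasurable
  have hhMem : ∀ t, MemLp (fun ω => gradient (Floc (ι t)) (y t ω)) 2 μ := by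
    intro t
    have hmeas : AEStronglyMeasurable (fun ω => gradient (Floc (ι t)) (y t ω)) μ :=
      ((hgradmeas (Floc (ι t))).comp (hymeasM t)).aestronglyMeasurable
    have hB : MemLp (fun ω => ζ + ρ * ‖gradient F (y t ω)‖) 2 μ :=
      (memLp_const ζ).add (((hgradFy t).norm).const_mul ρ)
    refine hB.of_le hmeas ?_
    refine Filter.Eventually.of_forall fun ω => ?_
    have h1 : ‖gradient (Floc (ι t)) (y t ω)‖ ^ 2
        ≤ (ζ + ρ * ‖gradient F (y t ω)‖) ^ 2 := by
      have := hhet (ι t) (y t ω)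
      nlinarith [norm_nonneg (gradient F (y t ω)), norm_nonneg (gradient (Floc (ι t)) (y t ω)),
        mul_nonneg (mul_nonneg hζ hρ) (norm_nonneg (gradient F (y t ω)))]
    have h2 : 0 ≤ ζ + ρ * ‖gradient F (y t ω)‖ := by positivity
    have h3 : ‖gradient (Floc (ι t)) (y t ω)‖ ≤ ζ + ρ * ‖gradient F (y t ω)‖ := by
      nlinarith [norm_nonneg (gradient (Floc (ι t)) (y t ω))]
    exact h3.trans (le_abs_self _)
  -- integrability of the squared norms
  have hIsq : ∀ (w : Ω → EuclideanSpace ℝ (Fin d)), MemLp w 2 μ →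
      Integrable (fun ω => ‖w ω‖ ^ 2) μ := fun w hw =>
    (memLp_two_iff_integrable_sq_norm hw.aestronglyMeasurable).mp hw
  -- Step A : second moment bound at each iteration
  have hStepA : ∀ t, ∫ ω, ‖g t ω‖ ^ 2 ∂μ
      ≤ σ ^ 2 + ζ ^ 2 + ρ ^ 2 * ∫ ω, ‖gradient F (y t ω)‖ ^ 2 ∂μ := by
    intro t
    have hdecomp := integral_norm_sq_decomp (hℱle t) (hg2 t) (hhMem t) (hhSM t) (hUG t)
    have hvar : ∫ ω, ‖g t ω - gradient (Floc (ι t)) (y t ω)‖ ^ 2 ∂μ ≤ σ ^ 2 := by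
      have hint : Integrable (fun ω => ‖g t ω - gradient (Floc (ι t)) (y t ω)‖ ^ 2) μ :=
        hIsq _ ((hg2 t).sub (hhMem t))
      calc ∫ ω, ‖g t ω - gradient (Floc (ι t)) (y t ω)‖ ^ 2 ∂μ
          = ∫ ω, (μ[(fun ω => ‖g t ω - gradient (Floc (ι t)) (y t ω)‖ ^ 2)|ℱ t]) ω ∂μ :=
            (integral_condExp (hℱle t)).symm
        _ ≤ ∫ _ω, (σ ^ 2 : ℝ) ∂μ :=
            integral_mono_ae integrable_condExp (integrable_const _) (hBV t)
        _ = σ ^ 2 := by simp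
    have hsecond : ∫ ω, ‖gradient (Floc (ι t)) (y t ω)‖ ^ 2 ∂μ
        ≤ ζ ^ 2 + ρ ^ 2 * ∫ ω, ‖gradient F (y t ω)‖ ^ 2 ∂μ := by
      have hint1 : Integrable (fun ω => ‖gradient (Floc (ι t)) (y t ω)‖ ^ 2) μ :=
        hIsq _ (hhMem t)
      have hint2 : Integrable (fun ω => ζ ^ 2 + ρ ^ 2 * ‖gradient F (y t ω)‖ ^ 2) μ :=
        (integrable_const _).add ((hIsq _ (hgradFy t)).const_mul _)
      calc ∫ ω, ‖gradient (Floc (ι t)) (y t ω)‖ ^ 2 ∂μ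
          ≤ ∫ ω, (ζ ^ 2 + ρ ^ 2 * ‖gradient F (y t ω)‖ ^ 2) ∂μ :=
            integral_mono hint1 hint2 fun ω => hhet (ι t) (y t ω)
        _ = ζ ^ 2 + ρ ^ 2 * ∫ ω, ‖gradient F (y t ω)‖ ^ 2 ∂μ := by
            rw [integral_add (integrable_const _) ((hIsq _ (hgradFy t)).const_mul _),
              MeasureTheory.integral_const_mul]
            simp
    rw [hdecomp]
    linarith
  -- telescoping bound for the iterates
  have hztel : ∀ p q : ℕ, p ≤ q → ∀ ω,
      ‖z q ω - z p ω‖ ≤ ∑ u ∈ Finset.Ico p q, γ (ι u) * ‖g u ω‖ := by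
    intro p q hpq
    induction q, hpq using Nat.le_induction with
    | base => intro ω; simp
    | succ q hpq ih =>
        intro ω
        have hstep : z (q + 1) ω - z p ω = (z q ω - z p ω) - γ (ι q) • g q ω := by
          rw [hzrec q ω]; abel
        rw [hstep, Finset.sum_Ico_succ_top hpq]
        refine (norm_sub_le _ _).trans ?_
        have hsm : ‖γ (ι q) • g q ω‖ = γ (ι q) * ‖g q ω‖ := by
          rw [norm_smul, Real.norm_eq_abs, abs_of_pos (hγpos (ι q))]
        rw [hsm]
        exact add_le_add_left (ih ω) _
  -- Step C : distance to the cycle start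
  have hStepC : ∀ t, ∃ W : Finset ℕ, W ⊆ Finset.Ico (t - K) t ∧
      ∫ ω, ‖y t ω - z (t / K * K) ω‖ ^ 2 ∂μ
        ≤ (K : ℝ) * ∑ u ∈ W, γ (ι u) ^ 2 * ∫ ω, ‖g u ω‖ ^ 2 ∂μ := by
    intro t
    obtain ⟨p, hpt, htpK, hyz⟩ := hyp t
    have hmKle : t / K * K ≤ t := Nat.div_mul_le_self t K
    have htlt : t < t / K * K + K := by
      have h1 : t / K * K + t % K = t := Nat.div_add_mod' t K
      have h2 : t % K < K := Nat.mod_lt t hKpos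
      omega
    refine ⟨Finset.Ico (min p (t / K * K)) (max p (t / K * K)), ?_, ?_⟩
    · intro u hu
      rw [Finset.mem_Ico] at hu ⊢
      constructor
      · have h1 : t - K ≤ p := by omega
        have h2 : t - K ≤ t / K * K := by omega
        omega
      · have h1 : max p (t / K * K) ≤ t := max_le hpt hmKle
        omega
    · set W := Finset.Ico (min p (t / K * K)) (max p (t / K * K)) with hW
      have hcard : (W.card : ℝ) ≤ (K : ℝ) := by
        have h1 : W.card ≤ K := by
          rw [hW, Nat.card_Ico]
          rcases le_total p (t / K * K) with h | h
          · rw [min_eq_left h, max_eq_right h]; omega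
          · rw [min_eq_right h, max_eq_left h]; omega
        exact_mod_cast h1
      have hpw : ∀ ω, ‖y t ω - z (t / K * K) ω‖ ^ 2
          ≤ (K : ℝ) * ∑ u ∈ W, γ (ι u) ^ 2 * ‖g u ω‖ ^ 2 := by
        intro ω
        have h1 : ‖y t ω - z (t / K * K) ω‖ ≤ ∑ u ∈ W, γ (ι u) * ‖g u ω‖ := by
          rcases le_total p (t / K * K) with h | h
          · have : W = Finset.Ico p (t / K * K) := by rw [hW, min_eq_left h, max_eq_right h]
            rw [this, hyz, ← norm_sub_rev]
            exact hztel p (t / K * K) h ω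
          · have : W = Finset.Ico (t / K * K) p := by rw [hW, min_eq_right h, max_eq_left h]
            rw [this, hyz]
            exact hztel (t / K * K) p h ω
        have h2 : ‖y t ω - z (t / K * K) ω‖ ^ 2 ≤ (∑ u ∈ W, γ (ι u) * ‖g u ω‖) ^ 2 :=
          pow_le_pow_left₀ (norm_nonneg _) h1 2
        have h3 : (∑ u ∈ W, γ (ι u) * ‖g u ω‖) ^ 2
            ≤ (W.card : ℝ) * ∑ u ∈ W, (γ (ι u) * ‖g u ω‖) ^ 2 :=
          sq_sum_le_card_mul_sum_sq
        have h5 : ∑ u ∈ W, (γ (ι u) * ‖g u ω‖) ^ 2 = ∑ u ∈ W, γ (ι u) ^ 2 * ‖g u ω‖ ^ 2 :=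
          Finset.sum_congr rfl fun u _ => by ring
        rw [h5] at h3
        have h4 : (W.card : ℝ) * ∑ u ∈ W, γ (ι u) ^ 2 * ‖g u ω‖ ^ 2
            ≤ (K : ℝ) * ∑ u ∈ W, γ (ι u) ^ 2 * ‖g u ω‖ ^ 2 := by
          refine mul_le_mul_of_nonneg_right hcard ?_
          exact Finset.sum_nonneg fun u _ => mul_nonneg (sq_nonneg _) (sq_nonneg _)
        linarith
      have hiL : Integrable (fun ω => ‖y t ω - z (t / K * K) ω‖ ^ 2) μ :=
        hIsq _ ((hyMem t).sub (hzMem _))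
      have hiR0 : Integrable (fun ω => ∑ u ∈ W, γ (ι u) ^ 2 * ‖g u ω‖ ^ 2) μ :=
        integrable_finset_sum _ fun u _ => (hIsq _ (hg2 u)).const_mul _
      have hiR : Integrable (fun ω => (K : ℝ) * ∑ u ∈ W, γ (ι u) ^ 2 * ‖g u ω‖ ^ 2) μ :=
        hiR0.const_mul _
      calc ∫ ω, ‖y t ω - z (t / K * K) ω‖ ^ 2 ∂μ
          ≤ ∫ ω, (K : ℝ) * ∑ u ∈ W, γ (ι u) ^ 2 * ‖g u ω‖ ^ 2 ∂μ :=
            integral_mono hiL hiR hpw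
        _ = (K : ℝ) * ∑ u ∈ W, γ (ι u) ^ 2 * ∫ ω, ‖g u ω‖ ^ 2 ∂μ := by
            rw [MeasureTheory.integral_const_mul]
            congr 1
            rw [integral_finset_sum _ fun u _ => (hIsq _ (hg2 u)).const_mul _]
            exact Finset.sum_congr rfl fun u _ => by rw [MeasureTheory.integral_const_mul]
  -- Step B : gradient at stale point vs cycle start
  have hStepB : ∀ t, ∫ ω, ‖gradient F (y t ω)‖ ^ 2 ∂μ
      ≤ 2 * ∫ ω, ‖gradient F (z (t / K * K) ω)‖ ^ 2 ∂μ
        + 2 * L ^ 2 * ∫ ω, ‖y t ω - z (t / K * K) ω‖ ^ 2 ∂μ := by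
    intro t
    have hpw : ∀ ω, ‖gradient F (y t ω)‖ ^ 2
        ≤ 2 * ‖gradient F (z (t / K * K) ω)‖ ^ 2
          + 2 * L ^ 2 * ‖y t ω - z (t / K * K) ω‖ ^ 2 := by
      intro ω
      have h1 := hL (y t ω) (z (t / K * K) ω)
      have h2 := norm_sub_norm_le (gradient F (y t ω)) (gradient F (z (t / K * K) ω))
      have h3 : ‖gradient F (y t ω)‖
          ≤ ‖gradient F (z (t / K * K) ω)‖ + L * ‖y t ω - z (t / K * K) ω‖ := by linarith
      nlinarith [norm_nonneg (gradient F (y t ω)),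
        norm_nonneg (gradient F (z (t / K * K) ω)),
        norm_nonneg (y t ω - z (t / K * K) ω),
        sq_nonneg (‖gradient F (z (t / K * K) ω)‖ - L * ‖y t ω - z (t / K * K) ω‖)]
    have hi1 : Integrable (fun ω => ‖gradient F (y t ω)‖ ^ 2) μ := hIsq _ (hgradFy t)
    have hi2 : Integrable (fun ω => ‖gradient F (z (t / K * K) ω)‖ ^ 2) μ :=
      hIsq _ (hgradFz _)
    have hi3 : Integrable (fun ω => ‖y t ω - z (t / K * K) ω‖ ^ 2) μ :=
      hIsq _ ((hyMem t).sub (hzMem _))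
    calc ∫ ω, ‖gradient F (y t ω)‖ ^ 2 ∂μ
        ≤ ∫ ω, (2 * ‖gradient F (z (t / K * K) ω)‖ ^ 2
            + 2 * L ^ 2 * ‖y t ω - z (t / K * K) ω‖ ^ 2) ∂μ := by
          refine integral_mono hi1 ?_ hpw
          exact (hi2.const_mul _).add (hi3.const_mul _)
      _ = 2 * ∫ ω, ‖gradient F (z (t / K * K) ω)‖ ^ 2 ∂μ
            + 2 * L ^ 2 * ∫ ω, ‖y t ω - z (t / K * K) ω‖ ^ 2 ∂μ := by
          rw [integral_add (hi2.const_mul _) (hi3.const_mul _),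
            MeasureTheory.integral_const_mul, MeasureTheory.integral_const_mul]
  -- coefficient bound from the stepsize condition
  have hcoef : ∀ i, 2 * ρ ^ 2 * L ^ 2 * (K : ℝ) * γ i ^ 2 ≤ 1 / (2 * (K : ℝ)) := by
    intro i
    have hx0 : (0 : ℝ) ≤ 2 * (K : ℝ) * L * ρ * γ i := by
      have hKnn : (0 : ℝ) ≤ 2 * (K : ℝ) := by positivity
      exact mul_nonneg (mul_nonneg (mul_nonneg hKnn hL0) hρ) (hγpos i).le
    have hsq : (2 * (K : ℝ) * L * ρ * γ i) ^ 2 ≤ 1 := by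
      nlinarith [hγmax i]
    rw [le_div_iff₀ (by positivity : (0 : ℝ) < 2 * (K : ℝ))]
    calc 2 * ρ ^ 2 * L ^ 2 * (K : ℝ) * γ i ^ 2 * (2 * (K : ℝ))
        = (2 * (K : ℝ) * L * ρ * γ i) ^ 2 := by ring
      _ ≤ 1 := hsq
  -- assemble the per-iteration bound
  choose W hWsub hWle using hStepC
  set c : ℕ → ℝ := fun u => γ (ι u) ^ 2 * ∫ ω, ‖g u ω‖ ^ 2 ∂μ with hc
  have hcnn : ∀ u, 0 ≤ c u := fun u => mul_nonneg (sq_nonneg _) (hgsqnn u)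
  have hper : ∀ t, c t ≤ γ (ι t) ^ 2 * (σ ^ 2 + ζ ^ 2)
      + 2 * ρ ^ 2 * (γ (ι t) ^ 2 * ∫ ω, ‖gradient F (z (t / K * K) ω)‖ ^ 2 ∂μ)
      + (1 / (2 * (K : ℝ))) * ∑ u ∈ W t, c u := by
    intro t
    have hWle' : ∫ ω, ‖y t ω - z (t / K * K) ω‖ ^ 2 ∂μ ≤ (K : ℝ) * ∑ u ∈ W t, c u := hWle t
    have hSnn : 0 ≤ ∑ u ∈ W t, c u := Finset.sum_nonneg fun u _ => hcnn u
    have key : ∫ ω, ‖g t ω‖ ^ 2 ∂μ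
        ≤ (σ ^ 2 + ζ ^ 2) + 2 * ρ ^ 2 * ∫ ω, ‖gradient F (z (t / K * K) ω)‖ ^ 2 ∂μ
          + 2 * ρ ^ 2 * L ^ 2 * (K : ℝ) * ∑ u ∈ W t, c u := by
      have h1 := hStepA t
      have h2 := hStepB t
      nlinarith [sq_nonneg ρ, mul_le_mul_of_nonneg_left hWle'
        (by positivity : (0:ℝ) ≤ 2 * L ^ 2),
        mul_le_mul_of_nonneg_left h2 (sq_nonneg ρ)]
    have hγnn : (0 : ℝ) ≤ γ (ι t) ^ 2 := sq_nonneg _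
    calc c t = γ (ι t) ^ 2 * ∫ ω, ‖g t ω‖ ^ 2 ∂μ := rfl
      _ ≤ γ (ι t) ^ 2 * ((σ ^ 2 + ζ ^ 2)
            + 2 * ρ ^ 2 * ∫ ω, ‖gradient F (z (t / K * K) ω)‖ ^ 2 ∂μ
            + 2 * ρ ^ 2 * L ^ 2 * (K : ℝ) * ∑ u ∈ W t, c u) :=
          mul_le_mul_of_nonneg_left key hγnn
      _ = γ (ι t) ^ 2 * (σ ^ 2 + ζ ^ 2)
            + 2 * ρ ^ 2 * (γ (ι t) ^ 2 * ∫ ω, ‖gradient F (z (t / K * K) ω)‖ ^ 2 ∂μ)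
            + (2 * ρ ^ 2 * L ^ 2 * (K : ℝ) * γ (ι t) ^ 2) * ∑ u ∈ W t, c u := by ring
      _ ≤ γ (ι t) ^ 2 * (σ ^ 2 + ζ ^ 2)
            + 2 * ρ ^ 2 * (γ (ι t) ^ 2 * ∫ ω, ‖gradient F (z (t / K * K) ω)‖ ^ 2 ∂μ)
            + (1 / (2 * (K : ℝ))) * ∑ u ∈ W t, c u := by
          refine add_le_add_right (mul_le_mul_of_nonneg_right (hcoef (ι t)) hSnn) _
  -- sums
  set S : ℝ := ∑ t ∈ Finset.range (M * K), c t with hS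
  have hLHS : ∑ m ∈ Finset.range M, ∑ k ∈ Finset.range K,
      γ (ι k) ^ 2 * ∫ ω, ‖g (m * K + k) ω‖ ^ 2 ∂μ = S := by
    rw [hS, sum_range_mul_eq c M K]
    refine Finset.sum_congr rfl fun m _ => Finset.sum_congr rfl fun k _ => ?_
    have hik : ι (m * K + k) = ι k := by rw [Nat.add_comm, hι_add]
    simp only [hc, hik]
  have hT1 : ∑ t ∈ Finset.range (M * K), γ (ι t) ^ 2 = (M : ℝ) * A := by
    rw [sum_range_mul_eq (fun t => γ (ι t) ^ 2) M K]
    have : ∀ m, ∑ k ∈ Finset.range K, γ (ι (m * K + k)) ^ 2 = A := by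
      intro m
      refine Finset.sum_congr rfl fun k _ => ?_
      rw [show m * K + k = k + m * K from Nat.add_comm _ _, hι_add]
    rw [Finset.sum_congr rfl fun m _ => this m]
    rw [Finset.sum_const, Finset.card_range, nsmul_eq_mul]
  have hdiv : ∀ m k, k < K → (m * K + k) / K = m := by
    intro m k hk
    rw [show m * K + k = k + K * m from by rw [Nat.add_comm, Nat.mul_comm],
      Nat.add_mul_div_left _ _ hKpos, Nat.div_eq_of_lt hk]
    omega
  have hT2 : ∑ t ∈ Finset.range (M * K),
      γ (ι t) ^ 2 * ∫ ω, ‖gradient F (z (t / K * K) ω)‖ ^ 2 ∂μ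
      = A * ∑ m ∈ Finset.range M, ∫ ω, ‖gradient F (z (m * K) ω)‖ ^ 2 ∂μ := by
    rw [sum_range_mul_eq (fun t => γ (ι t) ^ 2 * ∫ ω, ‖gradient F (z (t / K * K) ω)‖ ^ 2 ∂μ) M K]
    rw [Finset.mul_sum]
    refine Finset.sum_congr rfl fun m hm => ?_
    have hinner : ∀ k ∈ Finset.range K,
        γ (ι (m * K + k)) ^ 2 * ∫ ω, ‖gradient F (z ((m * K + k) / K * K) ω)‖ ^ 2 ∂μ
        = γ (ι k) ^ 2 * ∫ ω, ‖gradient F (z (m * K) ω)‖ ^ 2 ∂μ := by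
      intro k hk
      rw [Finset.mem_range] at hk
      rw [hdiv m k hk, show m * K + k = k + m * K from Nat.add_comm _ _, hι_add]
    rw [Finset.sum_congr rfl hinner, ← Finset.sum_mul]
  have hT3 : ∑ t ∈ Finset.range (M * K), ∑ u ∈ W t, c u ≤ (K : ℝ) * S := by
    have hWsub' : ∀ t ∈ Finset.range (M * K), W t ⊆ Finset.range (M * K) := by
      intro t ht u hu
      have h1 := hWsub t hu
      rw [Finset.mem_Ico] at h1
      rw [Finset.mem_range] at ht ⊢
      omega
    calc ∑ t ∈ Finset.range (M * K), ∑ u ∈ W t, c u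
        = ∑ t ∈ Finset.range (M * K), ∑ u ∈ Finset.range (M * K),
            if u ∈ W t then c u else 0 := by
          refine Finset.sum_congr rfl fun t ht => ?_
          rw [Finset.sum_ite_mem, Finset.inter_eq_right.mpr (hWsub' t ht)]
      _ = ∑ u ∈ Finset.range (M * K), ∑ t ∈ Finset.range (M * K),
            if u ∈ W t then c u else 0 := Finset.sum_comm
      _ ≤ ∑ u ∈ Finset.range (M * K), (K : ℝ) * c u := by
          refine Finset.sum_le_sum fun u hu => ?_
          rw [← Finset.sum_filter]
          rw [Finset.sum_const, nsmul_eq_mul]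
          refine mul_le_mul_of_nonneg_right ?_ (hcnn u)
          have hsubset : (Finset.range (M * K)).filter (fun t => u ∈ W t)
              ⊆ Finset.Ioc u (u + K) := by
            intro t ht
            rw [Finset.mem_filter] at ht
            have h1 := hWsub t ht.2
            rw [Finset.mem_Ico] at h1
            rw [Finset.mem_Ioc]
            omega
          have := Finset.card_le_card hsubset
          rw [Nat.card_Ioc] at this
          have h2 : ((Finset.range (M * K)).filter (fun t => u ∈ W t)).card ≤ K := by omega
          exact_mod_cast h2
      _ = (K : ℝ) * S := by rw [hS, ← Finset.mul_sum]
  have hsum := Finset.sum_le_sum fun t (_ : t ∈ Finset.range (M * K)) => hper t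
  rw [Finset.sum_add_distrib, Finset.sum_add_distrib, ← Finset.sum_mul, hT1,
    ← Finset.mul_sum, hT2, ← Finset.mul_sum] at hsum
  have hT3' : (1 / (2 * (K : ℝ))) * ∑ t ∈ Finset.range (M * K), ∑ u ∈ W t, c u
      ≤ (1 / (2 * (K : ℝ))) * ((K : ℝ) * S) := by
    refine mul_le_mul_of_nonneg_left hT3 ?_
    positivity
  have hhalf : (1 / (2 * (K : ℝ))) * ((K : ℝ) * S) = S / 2 := by
    have hKne : (K : ℝ) ≠ 0 := by positivity
    field_simp
  rw [hLHS]
  have hfin : S ≤ (M : ℝ) * A * (σ ^ 2 + ζ ^ 2)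
      + 2 * ρ ^ 2 * (A * ∑ m ∈ Finset.range M, ∫ ω, ‖gradient F (z (m * K) ω)‖ ^ 2 ∂μ)
      + S / 2 := by
    calc S ≤ (M : ℝ) * A * (σ ^ 2 + ζ ^ 2)
        + 2 * ρ ^ 2 * (A * ∑ m ∈ Finset.range M, ∫ ω, ‖gradient F (z (m * K) ω)‖ ^ 2 ∂μ)
        + (1 / (2 * (K : ℝ))) * ∑ t ∈ Finset.range (M * K), ∑ u ∈ W t, c u := hsum
      _ ≤ _ := by rw [← hhalf]; exact add_le_add_right hT3' _
  linarith
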